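/- Let Γ ≤ Δ be countable discrete groups. The co-induction map CIND_Γ^Δ : IRS(Γ) → IRS(Δ) is continuous (with respect to the weak* topologies) if and only if either [Δ : Γ] < ∞ or core_Δ(Γ) = {e}. -/

import Mathlib

open MeasureTheory

namespace IRSPaper


/-! ## Basic setup: the space of subgroups, invariant random subgroups -/

/-- The conjugation action of a group on its space of subgroups: `g • H = gHg⁻¹`. -/
def conjSub {G : Type*} [Group G] (g : G) (H : Subgroup G) : Subgroup G :=
  Subgroup.map ((MulAut.conj g).toMonoidHom) H

/-- The topology on the space of subgroups of `G`, induced from the product topology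
on `G → Bool` (i.e. the topology of `2^G`). -/
noncomputable instance instTopSub (G : Type*) [Group G] : TopologicalSpace (Subgroup G) :=
  TopologicalSpace.induced
    (fun (H : Subgroup G) (g : G) => @decide (g ∈ H) (Classical.dec _)) inferInstance

/-- The Borel σ-algebra on the space of subgroups. -/
noncomputable instance instMeasSub (G : Type*) [Group G] : MeasurableSpace (Subgroup G) :=
  borel _

instance instBorelSub (G : Type*) [Group G] : BorelSpace (Subgroup G) := ⟨rfl⟩

/-- An invariant random subgroup: a Borel probability measure on `Sub(G)` which is invariant
under the conjugation action of `G`. -/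
def IsIRS {G : Type*} [Group G] (θ : Measure (Subgroup G)) : Prop :=
  IsProbabilityMeasure θ ∧ ∀ g : G, Measure.map (conjSub g) θ = θ

/-- The basic set `N_F = {H ∈ Sub(G) : F ⊆ H}`. -/
def NSet {G : Type*} [Group G] (F : Set G) : Set (Subgroup G) :=
  {H : Subgroup G | F ⊆ (H : Set G)}

/-- For `Γ ≤ Δ` and `S ⊆ Δ`, the set of subgroups of `Γ` containing every element of `Γ`
whose image in `Δ` lies in `S`.  When `S = t⁻¹Ft ⊆ Γ`, this is exactly the basic set
`N_{t⁻¹Ft}^Γ ⊆ Sub(Γ)`. -/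
def NpullSet {Δ : Type*} [Group Δ] (Γ : Subgroup Δ) (S : Set Δ) : Set (Subgroup ↥Γ) :=
  {Λ : Subgroup ↥Γ | ∀ x : ↥Γ, (x : Δ) ∈ S → x ∈ Λ}

/-- `T` is a transversal for the left cosets `Δ/Γ`: each left coset `dΓ` contains exactly
one element of `T`. -/
def IsLeftTransversal {Δ : Type*} [Group Δ] (Γ : Subgroup Δ) (T : Set Δ) : Prop :=
  ∀ d : Δ, ∃! t : Δ, t ∈ T ∧ d⁻¹ * t ∈ Γ

/-- The defining property of the co-induced invariant random subgroup
`ν = CIND_Γ^Δ(θ)` (with respect to the transversal `T`):  for every finite `F ⊆ Δ`,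
`ν(N_F) = 0` if `F ⊄ core_Δ(Γ)` and `ν(N_F) = ∏_{t ∈ T} θ(N_{t⁻¹Ft}^Γ)` if `F ⊆ core_Δ(Γ)`. -/
def CindSpec {Δ : Type*} [Group Δ] (Γ : Subgroup Δ) (T : Set Δ)
    (θ : Measure (Subgroup ↥Γ)) (ν : Measure (Subgroup Δ)) : Prop :=
  ∀ F : Finset Δ,
    (¬ (F : Set Δ) ⊆ (Γ.normalCore : Set Δ) → ν (NSet (F : Set Δ)) = 0) ∧
    ((F : Set Δ) ⊆ (Γ.normalCore : Set Δ) →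
      ν (NSet (F : Set Δ)) =
        ∏' t : T, θ (NpullSet Γ ((fun d => (t : Δ)⁻¹ * d * (t : Δ)) '' (F : Set Δ))))

/-- Ergodicity of a (not necessarily probability-) measure-preserving action given by
an explicit family of maps: every invariant measurable set is null or conull. -/
def ErgodicAct {G α : Type*} [MeasurableSpace α] (act : G → α → α) (μ : Measure α) : Prop :=
  ∀ s : Set α, MeasurableSet s → (∀ g : G, act g ⁻¹' s = s) → μ s = 0 ∨ μ sᶜ = 0

/-- Weak mixing of an action: the diagonal action on the square is ergodic. -/
def WeaklyMixingAct {G α : Type*} [MeasurableSpace α] (act : G → α → α) (μ : Measure α) : Prop :=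
  ErgodicAct (fun (g : G) (p : α × α) => (act g p.1, act g p.2)) (μ.prod μ)

/-- A measure is non-atomic (has no atoms) if every singleton is null. -/
def NonAtomicMeasure {α : Type*} [MeasurableSpace α] (μ : Measure α) : Prop :=
  ∀ x : α, μ {x} = 0

/-- The kernel of an IRS `θ` of `Γ`: the set of `γ ∈ Γ` with `θ(N_γ) = 1`.  (For a probability
measure this set is a subgroup; taking `Subgroup.closure` makes it a `Subgroup` on the nose.) -/
def kerIRS {Δ : Type*} [Group Δ] (Γ : Subgroup Δ) (θ : Measure (Subgroup ↥Γ)) : Subgroup ↥Γ :=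
  Subgroup.closure {x : ↥Γ | θ {Λ : Subgroup ↥Γ | x ∈ Λ} = 1}

/-- `core_Δ(ker(θ))`, viewed as a subgroup of `Δ`. -/
def coreKer {Δ : Type*} [Group Δ] (Γ : Subgroup Δ) (θ : Measure (Subgroup ↥Γ)) : Subgroup Δ :=
  ((kerIRS Γ θ).map Γ.subtype).normalCore

/-! ## The space `IRS(G)` with the weak* topology -/

/-- The space `IRS(G)` of invariant random subgroups of `G`, as a subspace of the space of
Borel probability measures on `Sub(G)` with the topology of weak convergence. -/
def IRSSpace (G : Type*) [Group G] : Type _ :=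
  {θ : ProbabilityMeasure (Subgroup G) //
    ∀ g : G, Measure.map (conjSub g) (θ : Measure (Subgroup G)) = (θ : Measure (Subgroup G))}

noncomputable instance instTopIRSSpace (G : Type*) [Group G] :
    TopologicalSpace (IRSSpace G) :=
  instTopologicalSpaceSubtype

/-! ### Auxiliary development -/

section Aux

open Filter Topology TopologicalSpace

variable {G : Type*} [Group G]

/-- The canonical embedding of `Sub(G)` into `2^G`. -/
noncomputable def emb (G : Type*) [Group G] : Subgroup G → (G → Bool) :=
  fun (H : Subgroup G) (g : G) => @decide (g ∈ H) (Classical.dec _)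

lemma isInducing_emb : Topology.IsInducing (emb G) := ⟨rfl⟩

lemma emb_apply (H : Subgroup G) (g : G) : emb G H g = true ↔ g ∈ H := by
  simp [emb]

lemma emb_injective : Function.Injective (emb G) := by
  intro H K h
  ext g
  rw [← emb_apply, ← emb_apply, h]

lemma continuous_memCoord (g : G) : Continuous fun H : Subgroup G => emb G H g :=
  (continuous_apply g).comp isInducing_emb.continuous

lemma isClopen_memSet (g : G) : IsClopen {H : Subgroup G | g ∈ H} := by
  have : {H : Subgroup G | g ∈ H} = (fun H : Subgroup G => emb G H g) ⁻¹' {true} := by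
    ext H; simp [emb_apply]
  rw [this]
  exact (isClopen_discrete {true}).preimage (continuous_memCoord g)

lemma NSet_eq_iInter (A : Set G) : NSet A = ⋂ g ∈ A, {H : Subgroup G | g ∈ H} := by
  ext H; simp [NSet, Set.subset_def]

lemma isClopen_NSet (F : Finset G) : IsClopen (NSet (F : Set G)) := by
  rw [NSet_eq_iInter]
  exact Set.Finite.isClopen_biInter F.finite_toSet fun g _ => isClopen_memSet g

lemma measurableSet_NSet [Countable G] (A : Set G) : MeasurableSet (NSet A) := by
  rw [NSet_eq_iInter]
  exact MeasurableSet.biInter (Set.to_countable A)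
    fun g _ => (isClopen_memSet g).2.measurableSet

instance [Countable G] : SecondCountableTopology (Subgroup G) :=
  isInducing_emb.secondCountableTopology

end Aux
section Aux2

open Filter Topology TopologicalSpace

variable {G : Type*} [Group G]

lemma isClopen_coordTrue (x : G) : IsClopen {f : G → Bool | f x = true} :=
  (isClopen_discrete {true}).preimage (continuous_apply x)

lemma isClosed_range_emb : IsClosed (Set.range (emb G)) := by
  have hset : Set.range (emb G) =
      {f : G → Bool | f 1 = true} ∩
      ((⋂ (x : G) (y : G), ({f : G → Bool | f x = true}ᶜ ∪ {f | f y = true}ᶜ ∪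
          {f | f (x * y) = true})) ∩
        ⋂ (x : G), ({f : G → Bool | f x = true}ᶜ ∪ {f | f x⁻¹ = true})) := by
    ext f
    constructor
    · rintro ⟨H, rfl⟩
      refine ⟨(emb_apply H 1).mpr H.one_mem, ?_, ?_⟩
      · simp only [Set.mem_iInter, Set.mem_union, Set.mem_compl_iff, Set.mem_setOf_eq]
        intro x y
        by_cases hx : emb G H x = true
        · by_cases hy : emb G H y = true
          · exact Or.inr ((emb_apply H _).mpr (H.mul_mem ((emb_apply H x).mp hx)
              ((emb_apply H y).mp hy)))
          · exact Or.inl (Or.inr hy)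
        · exact Or.inl (Or.inl hx)
      · simp only [Set.mem_iInter, Set.mem_union, Set.mem_compl_iff, Set.mem_setOf_eq]
        intro x
        by_cases hx : emb G H x = true
        · exact Or.inr ((emb_apply H _).mpr (H.inv_mem ((emb_apply H x).mp hx)))
        · exact Or.inl hx
    · rintro ⟨h1, hmem⟩
      simp only [Set.mem_inter_iff, Set.mem_iInter, Set.mem_union, Set.mem_compl_iff,
        Set.mem_setOf_eq] at hmem
      obtain ⟨hmul, hinv⟩ := hmem
      refine ⟨{ carrier := {g : G | f g = true},
                one_mem' := h1,
                mul_mem' := ?_, inv_mem' := ?_ }, ?_⟩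
      · intro a b ha hb
        rcases hmul a b with (h | h) | h
        · exact absurd ha h
        · exact absurd hb h
        · exact h
      · intro a ha
        rcases hinv a with h | h
        · exact absurd ha h
        · exact h
      · funext g
        show (@decide (f g = true) (Classical.dec _)) = f g
        cases hfg : f g
        · simp
        · simp
  rw [hset]
  refine (isClopen_coordTrue 1).1.inter (IsClosed.inter ?_ ?_)
  · exact isClosed_iInter fun x => isClosed_iInter fun y =>
      (((isClopen_coordTrue x).compl.union (isClopen_coordTrue y).compl).union
        (isClopen_coordTrue (x * y))).1
  · exact isClosed_iInter fun x =>
      ((isClopen_coordTrue x).compl.union (isClopen_coordTrue x⁻¹)).1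

instance : CompactSpace (Subgroup G) := by
  refine ⟨?_⟩
  rw [isInducing_emb.isCompact_iff, Set.image_univ]
  exact isClosed_range_emb.isCompact

instance : T3Space (Subgroup G) :=
  (Topology.IsEmbedding.mk isInducing_emb emb_injective).t3Space

instance [Countable G] : TopologicalSpace.MetrizableSpace (Subgroup G) :=
  TopologicalSpace.metrizableSpace_of_t3_secondCountable (Subgroup G)

end Aux2
set_option linter.unusedSectionVars false

section Aux3

open Filter Topology TopologicalSpace MeasurableSpace
open scoped Classical

variable {G : Type*} [Group G]

lemma NSet_singleton (g : G) : NSet ((({g} : Finset G) : Set G)) = {H : Subgroup G | g ∈ H} := by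
  ext H; simp [NSet]

lemma NSet_union (F F' : Finset G) :
    NSet (((F ∪ F' : Finset G) : Set G)) = NSet (F : Set G) ∩ NSet (F' : Set G) := by
  ext H; simp [NSet, Set.union_subset_iff]

lemma isPiSystem_NSet :
    IsPiSystem {s : Set (Subgroup G) | ∃ F : Finset G, s = NSet (F : Set G)} := by
  rintro s ⟨F, rfl⟩ t ⟨F', rfl⟩ -
  exact ⟨F ∪ F', (NSet_union F F').symm⟩

lemma borel_eq_NSet [Countable G] :
    (instMeasSub G : MeasurableSpace (Subgroup G)) =
      MeasurableSpace.generateFrom {s : Set (Subgroup G) | ∃ F : Finset G, s = NSet (F : Set G)} := by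
  have hbasis : IsTopologicalBasis
      (Set.preimage (emb G) '' { S : Set (G → Bool) | ∃ (U : ∀ _ : G, Set Bool) (F : Finset G),
        (∀ i, i ∈ F → U i ∈ {U : Set Bool | IsOpen U}) ∧ S = (F : Set G).pi U }) :=
    (isTopologicalBasis_pi fun _ => isTopologicalBasis_opens).isInducing isInducing_emb
  apply le_antisymm
  · show (borel (Subgroup G)) ≤ _
    rw [hbasis.borel_eq_generateFrom]
    refine generateFrom_le ?_
    rintro - ⟨S, ⟨U, F, -, rfl⟩, rfl⟩
    have : emb G ⁻¹' ((F : Set G).pi U) =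
        ⋂ γ ∈ (F : Set G), {H : Subgroup G | emb G H γ ∈ U γ} := by
      ext H; simp [Set.mem_pi]
    rw [this]
    refine Set.Finite.measurableSet_biInter F.finite_toSet ?_
    intro γ _
    have hγ : MeasurableSet[MeasurableSpace.generateFrom
        {s : Set (Subgroup G) | ∃ F : Finset G, s = NSet (F : Set G)}]
        {H : Subgroup G | γ ∈ H} :=
      measurableSet_generateFrom ⟨{γ}, (NSet_singleton γ).symm⟩
    have hsplit : {H : Subgroup G | emb G H γ ∈ U γ} =
        (if true ∈ U γ then {H : Subgroup G | γ ∈ H} else ∅) ∪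
        (if false ∈ U γ then {H : Subgroup G | γ ∈ H}ᶜ else ∅) := by
      ext H
      by_cases hm : γ ∈ H
      · have : emb G H γ = true := (emb_apply H γ).mpr hm
        by_cases ht : true ∈ U γ <;> simp [this, hm, ht]
      · have : emb G H γ = false := by
          cases hfg : emb G H γ
          · rfl
          · exact absurd ((emb_apply H γ).mp hfg) hm
        by_cases hf : false ∈ U γ <;> simp [this, hm, hf]
    rw [hsplit]
    have hempty : MeasurableSet[MeasurableSpace.generateFrom
        {s : Set (Subgroup G) | ∃ F : Finset G, s = NSet (F : Set G)}]
        (∅ : Set (Subgroup G)) := @MeasurableSet.empty _ (MeasurableSpace.generateFrom _)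
    refine MeasurableSet.union ?_ ?_
    · split
      · exact hγ
      · exact hempty
    · split
      · exact hγ.compl
      · exact hempty
  · refine generateFrom_le ?_
    rintro - ⟨F, rfl⟩
    exact (isClopen_NSet F).2.measurableSet

/-- Two probability measures on `Sub(G)` agreeing on all basic sets `N_F` are equal. -/
lemma measure_ext_NSet [Countable G] {μ ν : Measure (Subgroup G)}
    [IsProbabilityMeasure μ] [IsProbabilityMeasure ν]
    (h : ∀ F : Finset G, μ (NSet (F : Set G)) = ν (NSet (F : Set G))) : μ = ν := by
  refine MeasureTheory.ext_of_generate_finite _ borel_eq_NSet isPiSystem_NSet ?_ ?_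
  · rintro - ⟨F, rfl⟩; exact h F
  · simp [measure_univ]

end Aux3
section Aux4

open Filter Topology TopologicalSpace MeasureTheory
open scoped Classical NNReal ENNReal

variable {G : Type*} [Group G]

lemma exists_finset_nhds (x : Subgroup G) {s : Set (Subgroup G)} (hs : s ∈ 𝓝 x) :
    ∃ E : Finset G, {y : Subgroup G | ∀ γ ∈ E, (γ ∈ y ↔ γ ∈ x)} ⊆ s := by
  rw [isInducing_emb.nhds_eq_comap, Filter.mem_comap] at hs
  obtain ⟨t, ht, hts⟩ := hs
  rw [nhds_pi] at ht
  obtain ⟨I, Ifin, tt, htt, hpi⟩ := Filter.mem_pi.mp ht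
  refine ⟨Ifin.toFinset, fun y hy => hts ?_⟩
  refine hpi fun γ hγ => ?_
  have hco : emb G y γ = emb G x γ := decide_eq_decide.mpr (hy γ (Ifin.mem_toFinset.mpr hγ))
  rw [hco]
  have := htt γ
  rwa [mem_nhds_discrete] at this

lemma isOpen_agree (E : Finset G) (x : Subgroup G) :
    IsOpen {y : Subgroup G | ∀ γ ∈ E, (γ ∈ y ↔ γ ∈ x)} := by
  have : {y : Subgroup G | ∀ γ ∈ E, (γ ∈ y ↔ γ ∈ x)} =
      ⋂ γ ∈ (E : Set G), {y : Subgroup G | γ ∈ y ↔ γ ∈ x} := by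
    ext y; simp
  rw [this]
  refine Set.Finite.isOpen_biInter E.finite_toSet fun γ _ => ?_
  by_cases hγx : γ ∈ x
  · have : {y : Subgroup G | γ ∈ y ↔ γ ∈ x} = {y : Subgroup G | γ ∈ y} := by ext y; simp [hγx]
    rw [this]; exact (isClopen_memSet γ).2
  · have : {y : Subgroup G | γ ∈ y ↔ γ ∈ x} = {y : Subgroup G | γ ∈ y}ᶜ := by ext y; simp [hγx]
    rw [this]; exact (isClopen_memSet γ).compl.2

lemma exists_osc (f : BoundedContinuousFunction (Subgroup G) ℝ) {ε : ℝ} (hε : 0 < ε) :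
    ∃ E : Finset G, ∀ y z : Subgroup G, (∀ γ ∈ E, (γ ∈ y ↔ γ ∈ z)) → |f y - f z| ≤ 2 * ε := by
  have hch : ∀ x : Subgroup G, ∃ E : Finset G,
      {y : Subgroup G | ∀ γ ∈ E, (γ ∈ y ↔ γ ∈ x)} ⊆ f ⁻¹' Metric.ball (f x) ε := fun x =>
    exists_finset_nhds x (f.continuous.continuousAt.preimage_mem_nhds (Metric.ball_mem_nhds _ hε))
  choose Ex hEx using hch
  have hcover : (Set.univ : Set (Subgroup G)) ⊆
      ⋃ x : Subgroup G, {y : Subgroup G | ∀ γ ∈ Ex x, (γ ∈ y ↔ γ ∈ x)} := fun y _ =>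
    Set.mem_iUnion.mpr ⟨y, fun γ _ => Iff.rfl⟩
  obtain ⟨s, hs⟩ := isCompact_univ.elim_finite_subcover _ (fun x => isOpen_agree (Ex x) x) hcover
  refine ⟨s.biUnion Ex, fun y z hyz => ?_⟩
  obtain ⟨x, hxs, hyx⟩ : ∃ x ∈ s, ∀ γ ∈ Ex x, (γ ∈ y ↔ γ ∈ x) := by
    have := hs (Set.mem_univ y); simpa using this
  have hzx : ∀ γ ∈ Ex x, (γ ∈ z ↔ γ ∈ x) := fun γ hγ =>
    ((hyz γ (Finset.mem_biUnion.mpr ⟨x, hxs, hγ⟩)).symm).trans (hyx γ hγ)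
  have h1 : |f y - f x| < ε := by simpa [Real.dist_eq] using hEx x hyx
  have h2 : |f z - f x| < ε := by simpa [Real.dist_eq] using hEx x hzx
  calc |f y - f z| ≤ |f y - f x| + |f x - f z| := abs_sub_le _ _ _
    _ ≤ ε + ε := add_le_add h1.le (by rw [abs_sub_comm]; exact h2.le)
    _ = 2 * ε := by ring

/-- Cylinder sets. -/
def cylSet (A B : Finset G) : Set (Subgroup G) :=
  {H : Subgroup G | (A : Set G) ⊆ (H : Set G) ∧ ∀ γ ∈ B, γ ∉ H}

lemma cylSet_empty (A : Finset G) : cylSet A ∅ = NSet (A : Set G) := by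
  ext H; simp [cylSet, NSet]

lemma measurableSet_cylSet [Countable G] (A B : Finset G) : MeasurableSet (cylSet A B) := by
  have : cylSet A B = NSet (A : Set G) ∩ ⋂ γ ∈ (B : Set G), {H : Subgroup G | γ ∈ H}ᶜ := by
    ext H; simp [cylSet, NSet]
  rw [this]
  exact (measurableSet_NSet _).inter (Set.Finite.measurableSet_biInter B.finite_toSet
    fun γ _ => (isClopen_memSet γ).2.measurableSet.compl)

lemma cylSet_insert (γ : G) (A B : Finset G) :
    cylSet A (insert γ B) = cylSet A B \ cylSet (insert γ A) B := by
  ext H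
  simp only [cylSet, Set.mem_setOf_eq, Set.mem_diff, Finset.forall_mem_insert,
    Finset.coe_insert, Set.insert_subset_iff, SetLike.mem_coe]
  tauto

lemma cylSet_insert_subset (γ : G) (A B : Finset G) :
    cylSet (insert γ A) B ⊆ cylSet A B := fun H h =>
  ⟨fun x hx => h.1 (by simp only [Finset.coe_insert, Set.mem_insert_iff]; exact Or.inr hx), h.2⟩

lemma tendsto_cylSet [Countable G] {ι : Type*} {l : Filter ι}
    {μs : ι → ProbabilityMeasure (Subgroup G)} {μ : ProbabilityMeasure (Subgroup G)}
    (h : ∀ F : Finset G,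
      Tendsto (fun i => ((μs i : Measure (Subgroup G)) (NSet (F : Set G))).toReal) l
        (𝓝 (((μ : Measure (Subgroup G)) (NSet (F : Set G))).toReal)))
    (B A : Finset G) :
    Tendsto (fun i => ((μs i : Measure (Subgroup G)) (cylSet A B)).toReal) l
      (𝓝 (((μ : Measure (Subgroup G)) (cylSet A B)).toReal)) := by
  induction B using Finset.induction_on generalizing A with
  | empty => simpa [cylSet_empty] using h A
  | @insert γ B hγ ih =>
    have hdiff : ∀ ν : Measure (Subgroup G), IsProbabilityMeasure ν →
        (ν (cylSet A (insert γ B))).toReal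
          = (ν (cylSet A B)).toReal - (ν (cylSet (insert γ A) B)).toReal := by
      intro ν hν
      rw [cylSet_insert, measure_diff (cylSet_insert_subset γ A B)
        ((measurableSet_cylSet _ _).nullMeasurableSet) (measure_ne_top ν _),
        ENNReal.toReal_sub_of_le (measure_mono (cylSet_insert_subset γ A B))
          (measure_ne_top ν _)]
    have hten := (ih A).sub (ih (insert γ A))
    rw [hdiff (μ : Measure (Subgroup G)) inferInstance]
    exact Tendsto.congr (fun i => (hdiff (μs i : Measure (Subgroup G)) inferInstance).symm) hten

end Aux4
section Aux5

open Filter Topology TopologicalSpace MeasureTheory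
open scoped Classical NNReal ENNReal

variable {G : Type*} [Group G]

/-- The key characterization: weak convergence of probability measures on `Sub(G)` is
equivalent to convergence of the measures of all basic sets `N_F`. -/
lemma tendsto_iff_forall_NSet [Countable G] {ι : Type*} {l : Filter ι}
    (μs : ι → ProbabilityMeasure (Subgroup G)) (μ : ProbabilityMeasure (Subgroup G)) :
    Tendsto μs l (𝓝 μ) ↔
      ∀ F : Finset G,
        Tendsto (fun i => ((μs i : Measure (Subgroup G)) (NSet (F : Set G))).toReal) l
          (𝓝 (((μ : Measure (Subgroup G)) (NSet (F : Set G))).toReal)) := by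
  constructor
  · intro h F
    have h_closeds : ∀ s, IsClosed s →
        (l.limsup fun i => (μs i : Measure (Subgroup G)) s) ≤ (μ : Measure (Subgroup G)) s := by
      intro s hs
      exact ProbabilityMeasure.limsup_measure_closed_le_of_tendsto h hs
    have h_opens : ∀ s, IsOpen s →
        (μ : Measure (Subgroup G)) s ≤ l.liminf fun i => (μs i : Measure (Subgroup G)) s := by
      intro s hs
      exact le_measure_liminf_of_limsup_measure_compl_le hs.measurableSet
        (h_closeds _ (isClosed_compl_iff.mpr hs))
    have hfr : (μ : Measure (Subgroup G)) (frontier (NSet (F : Set G))) = 0 := by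
      rw [(isClopen_NSet F).frontier_eq]; simp
    have key := tendsto_measure_of_null_frontier h_opens hfr
    exact (ENNReal.tendsto_toReal (measure_ne_top _ _)).comp key
  · intro h
    rw [MeasureTheory.ProbabilityMeasure.tendsto_iff_forall_integral_tendsto]
    intro f
    rw [Metric.tendsto_nhds]
    intro ε hε
    set ε' : ℝ := ε / 5 with hε'def
    have hε' : 0 < ε' := by positivity
    obtain ⟨E, hE⟩ := exists_osc f hε'
    -- the partition of `Sub(G)` into cylinders over `E`
    set P : Finset (Finset G) := E.powerset with hP
    set pc : Finset G → Set (Subgroup G) := fun A => cylSet A (E \ A) with hpc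
    have hmeas : ∀ A, MeasurableSet (pc A) := fun A => measurableSet_cylSet _ _
    have hmemA : ∀ H : Subgroup G,
        (E.filter (fun γ => γ ∈ H)) ∈ P ∧ H ∈ pc (E.filter (fun γ => γ ∈ H)) := by
      intro H
      refine ⟨Finset.mem_powerset.mpr (Finset.filter_subset _ _), ?_, ?_⟩
      · intro x hx
        simp only [Finset.coe_filter, Set.mem_setOf_eq] at hx
        exact hx.2
      · intro γ hγ
        rcases Finset.mem_sdiff.mp hγ with ⟨hγE, hγA⟩
        intro hγH
        exact hγA (Finset.mem_filter.mpr ⟨hγE, hγH⟩)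
    have huniq : ∀ A ∈ P, ∀ H : Subgroup G, H ∈ pc A → A = E.filter (fun γ => γ ∈ H) := by
      intro A hA H hH
      have hAE : A ⊆ E := Finset.mem_powerset.mp hA
      ext γ
      constructor
      · intro hγ
        exact Finset.mem_filter.mpr ⟨hAE hγ, hH.1 hγ⟩
      · intro hγ
        rcases Finset.mem_filter.mp hγ with ⟨hγE, hγH⟩
        by_contra hγA
        exact hH.2 γ (Finset.mem_sdiff.mpr ⟨hγE, hγA⟩) hγH
    have hdisj : (↑P : Set (Finset G)).PairwiseDisjoint pc := by
      intro A hA A' hA' hAA'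
      simp only [Function.onFun]
      rw [Set.disjoint_left]
      intro H hHA hHA'
      exact hAA' ((huniq A (by exact_mod_cast hA) H hHA).trans
        (huniq A' (by exact_mod_cast hA') H hHA').symm)
    have hcover : ⋃ A ∈ P, pc A = Set.univ := by
      refine Set.eq_univ_of_forall fun H => ?_
      exact Set.mem_biUnion (hmemA H).1 (hmemA H).2
    -- representatives and values
    set cA : Finset G → ℝ := fun A => if h : (pc A).Nonempty then f h.choose else 0 with hcA
    have hosc : ∀ A ∈ P, ∀ x ∈ pc A, |f x - cA A| ≤ 2 * ε' := by
      intro A hA x hx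
      have hne : (pc A).Nonempty := ⟨x, hx⟩
      rw [hcA]
      simp only [hne, dif_pos]
      refine hE x hne.choose ?_
      intro γ hγ
      have h1 : A = E.filter (fun γ => γ ∈ x) := huniq A hA x hx
      have h2 : A = E.filter (fun γ => γ ∈ hne.choose) := huniq A hA _ hne.choose_spec
      constructor
      · intro hγx
        have : γ ∈ A := h1 ▸ Finset.mem_filter.mpr ⟨hγ, hγx⟩
        exact (Finset.mem_filter.mp (h2 ▸ this)).2
      · intro hγy
        have : γ ∈ A := h2 ▸ Finset.mem_filter.mpr ⟨hγ, hγy⟩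
        exact (Finset.mem_filter.mp (h1 ▸ this)).2
    -- sum of measures of pieces is 1
    have hsumone : ∀ ν : Measure (Subgroup G), IsProbabilityMeasure ν →
        ∑ A ∈ P, (ν (pc A)).toReal = 1 := by
      intro ν hν
      have : ∑ A ∈ P, ν (pc A) = 1 := by
        rw [← measure_biUnion_finset hdisj (fun A _ => hmeas A), hcover, measure_univ]
      calc ∑ A ∈ P, (ν (pc A)).toReal
          = (∑ A ∈ P, ν (pc A)).toReal :=
            (ENNReal.toReal_sum (fun A _ => measure_ne_top ν _)).symm
        _ = 1 := by rw [this]; simp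
    -- the key approximation estimate
    have key : ∀ ν : ProbabilityMeasure (Subgroup G),
        |∫ x, f x ∂(ν : Measure (Subgroup G)) -
          ∑ A ∈ P, cA A * (((ν : Measure (Subgroup G))) (pc A)).toReal| ≤ 2 * ε' := by
      intro ν
      set m : Measure (Subgroup G) := (ν : Measure (Subgroup G)) with hm
      have hint : Integrable f m := f.integrable m
      have hptwise : ∀ x : Subgroup G, f x = ∑ A ∈ P, (pc A).indicator f x := by
        intro x
        rw [Finset.sum_eq_single_of_mem (E.filter (fun γ => γ ∈ x)) (hmemA x).1]
        · rw [Set.indicator_of_mem (hmemA x).2]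
        · intro A hA hAx
          refine Set.indicator_of_notMem (fun hxA => hAx ?_) f
          exact huniq A hA x hxA
      have hsplit : ∫ x, f x ∂m = ∑ A ∈ P, ∫ x in pc A, f x ∂m := by
        calc ∫ x, f x ∂m = ∫ x, (∑ A ∈ P, (pc A).indicator f x) ∂m :=
              integral_congr_ae (Filter.Eventually.of_forall hptwise)
          _ = ∑ A ∈ P, ∫ x, (pc A).indicator f x ∂m :=
              integral_finset_sum P (fun A _ => hint.indicator (hmeas A))
          _ = ∑ A ∈ P, ∫ x in pc A, f x ∂m :=
              Finset.sum_congr rfl (fun A _ => integral_indicator (hmeas A))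
      have hterm : ∀ A ∈ P, |∫ x in pc A, f x ∂m - cA A * (m (pc A)).toReal|
          ≤ 2 * ε' * (m (pc A)).toReal := by
        intro A hA
        have hconst : ∫ x in pc A, (cA A) ∂m = (m (pc A)).toReal • (cA A) :=
          setIntegral_const (cA A)
        have hsub : ∫ x in pc A, (f x - cA A) ∂m
            = ∫ x in pc A, f x ∂m - cA A * (m (pc A)).toReal := by
          rw [integral_sub hint.integrableOn
            (integrableOn_const (measure_lt_top m _).ne), hconst,
            smul_eq_mul, mul_comm]
        rw [← hsub]
        have := norm_setIntegral_le_of_norm_le_const (μ := m) (s := pc A)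
          (f := fun x => f x - cA A) (C := 2 * ε') (measure_lt_top m _)
          (fun x hx => by
            rw [Real.norm_eq_abs]
            exact hosc A hA x hx)
        rwa [Real.norm_eq_abs] at this
      calc |∫ x, f x ∂m - ∑ A ∈ P, cA A * (m (pc A)).toReal|
          = |∑ A ∈ P, (∫ x in pc A, f x ∂m - cA A * (m (pc A)).toReal)| := by
            rw [Finset.sum_sub_distrib, ← hsplit]
        _ ≤ ∑ A ∈ P, |∫ x in pc A, f x ∂m - cA A * (m (pc A)).toReal| :=
            Finset.abs_sum_le_sum_abs _ _
        _ ≤ ∑ A ∈ P, 2 * ε' * (m (pc A)).toReal := Finset.sum_le_sum hterm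
        _ = 2 * ε' * ∑ A ∈ P, (m (pc A)).toReal := by rw [Finset.mul_sum]
        _ = 2 * ε' := by rw [hsumone m inferInstance, mul_one]
    -- the sums converge
    have hsum : Tendsto
        (fun i => ∑ A ∈ P, cA A * (((μs i : Measure (Subgroup G))) (pc A)).toReal) l
        (𝓝 (∑ A ∈ P, cA A * (((μ : Measure (Subgroup G))) (pc A)).toReal)) := by
      refine tendsto_finset_sum P (fun A _ => ?_)
      exact Tendsto.const_mul (cA A) (tendsto_cylSet h (E \ A) A)
    have hS := (Metric.tendsto_nhds.mp hsum) ε' hε'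
    filter_upwards [hS] with i hi
    rw [Real.dist_eq] at hi ⊢
    set Ii := ∫ x, f x ∂(μs i : Measure (Subgroup G)) with hIi
    set I := ∫ x, f x ∂(μ : Measure (Subgroup G)) with hI
    set Si := ∑ A ∈ P, cA A * (((μs i : Measure (Subgroup G))) (pc A)).toReal with hSi
    set S := ∑ A ∈ P, cA A * (((μ : Measure (Subgroup G))) (pc A)).toReal with hSdef
    have t1 : |Ii - Si| ≤ 2 * ε' := key (μs i)
    have t2 : |I - S| ≤ 2 * ε' := key μ
    have tri1 : |Ii - I| ≤ |Ii - Si| + |Si - I| := abs_sub_le _ _ _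
    have tri2 : |Si - I| ≤ |Si - S| + |S - I| := abs_sub_le _ _ _
    have t2' : |S - I| ≤ 2 * ε' := by rwa [abs_sub_comm]
    have hεsum : ε' * 5 = ε := by rw [hε'def]; ring
    linarith
  
end Aux5
section Aux6

open Filter Topology MeasureTheory
open scoped Classical NNReal ENNReal

variable {G : Type*} [Group G]

lemma mem_conjSub {g : G} {H : Subgroup G} {x : G} : x ∈ conjSub g H ↔ g⁻¹ * x * g ∈ H := by
  rw [conjSub, Subgroup.mem_map_equiv, MulAut.conj_symm_apply]

lemma continuous_conjSub (g : G) : Continuous (conjSub g : Subgroup G → Subgroup G) := by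
  rw [isInducing_emb.continuous_iff]
  refine continuous_pi fun γ => ?_
  have heq : (fun H : Subgroup G => (emb G ∘ conjSub g) H γ)
      = fun H : Subgroup G => emb G H (g⁻¹ * γ * g) := by
    funext H
    exact decide_eq_decide.mpr mem_conjSub
  show Continuous fun H : Subgroup G => (emb G ∘ conjSub g) H γ
  rw [heq]
  exact continuous_memCoord _

lemma measurable_conjSub (g : G) : Measurable (conjSub g : Subgroup G → Subgroup G) :=
  (continuous_conjSub g).measurable

lemma conjSub_top (g : G) : conjSub g (⊤ : Subgroup G) = ⊤ := by
  ext x; simp [mem_conjSub]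

lemma conjSub_bot (g : G) : conjSub g (⊥ : Subgroup G) = ⊥ := by
  ext x
  rw [mem_conjSub, Subgroup.mem_bot, Subgroup.mem_bot]
  constructor
  · intro h
    have : x = g * 1 * g⁻¹ := by
      rw [← h]; group
    simpa using this
  · rintro rfl; group

lemma NpullSet_eq_NSet {Δ : Type*} [Group Δ] (Γ : Subgroup Δ) (S : Set Δ) :
    NpullSet Γ S = NSet ((Subtype.val : ↥Γ → Δ) ⁻¹' S) := by
  ext Λ
  simp [NpullSet, NSet, Set.subset_def]

lemma top_mem_NSet {A : Set G} : (⊤ : Subgroup G) ∈ NSet A := fun x _ => trivial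

lemma tprod_const_zero {β : Type*} [Infinite β] {a : ℝ≥0∞} (ha : a < 1) :
    ∏' _ : β, a = 0 := by
  refine HasProd.tprod_eq ?_
  have hpow := ENNReal.tendsto_pow_atTop_nhds_zero_of_lt_one ha
  have hcard : Tendsto (fun s : Finset β => s.card) atTop atTop := by
    rw [tendsto_atTop_atTop]
    intro N
    obtain ⟨s₀, -, hcard⟩ := Infinite.exists_superset_card_eq (∅ : Finset β) N (by simp)
    exact ⟨s₀, fun s hs => hcard ▸ Finset.card_le_card hs⟩
  have hcomp := hpow.comp hcard
  exact (hcomp.congr fun s => by simp [Finset.prod_const])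

lemma transversal_finite {Δ : Type*} [Group Δ] {Γ : Subgroup Δ} {T : Set Δ}
    (hT : IsLeftTransversal Γ T) (hfin : Finite (Δ ⧸ Γ)) : Finite ↥T := by
  have hinj : Function.Injective (fun t : ↥T => (QuotientGroup.mk (t : Δ) : Δ ⧸ Γ)) := by
    intro t₁ t₂ h12
    obtain ⟨u, -, huniq⟩ := hT (t₁ : Δ)
    have h1 : (t₁ : Δ) = u := huniq _ ⟨t₁.2, by rw [inv_mul_cancel]; exact Γ.one_mem⟩
    have hmem : (t₁ : Δ)⁻¹ * (t₂ : Δ) ∈ Γ := QuotientGroup.eq.mp h12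
    have h2 : (t₂ : Δ) = u := huniq _ ⟨t₂.2, hmem⟩
    exact Subtype.ext (h1.trans h2.symm)
  exact Finite.of_injective _ hinj

lemma transversal_infinite {Δ : Type*} [Group Δ] {Γ : Subgroup Δ} {T : Set Δ}
    (hT : IsLeftTransversal Γ T) (hinf : ¬ Finite (Δ ⧸ Γ)) : Infinite ↥T := by
  rw [not_finite_iff_infinite] at hinf
  have hsurj : Function.Surjective (fun t : ↥T => (QuotientGroup.mk (t : Δ) : Δ ⧸ Γ)) := by
    intro q
    induction q using QuotientGroup.induction_on with
    | _ d =>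
      obtain ⟨t, ⟨htT, htd⟩, -⟩ := hT d
      refine ⟨⟨t, htT⟩, ?_⟩
      show (QuotientGroup.mk t : Δ ⧸ Γ) = QuotientGroup.mk d
      rw [QuotientGroup.eq]
      simpa using Γ.inv_mem htd
  exact Infinite.of_surjective _ hsurj

lemma mix_apply (a b : ℝ≥0∞) {s : Set (Subgroup G)} (hs : MeasurableSet s) :
    (a • Measure.dirac (⊤ : Subgroup G) + b • Measure.dirac (⊥ : Subgroup G)) s
      = a * s.indicator 1 ⊤ + b * s.indicator 1 ⊥ := by
  simp [Measure.add_apply, Measure.smul_apply, Measure.dirac_apply' _ hs, smul_eq_mul]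

end Aux6
section Main

open Filter Topology MeasureTheory
open scoped Classical NNReal ENNReal

/-- **Proposition 1.8 / 6.1.** The co-induction map `CIND_Γ^Δ : IRS(Γ) → IRS(Δ)` is
continuous (for the weak* topologies) iff `[Δ : Γ] < ∞` or `core_Δ(Γ)` is trivial. -/
theorem coinduction_IRS_continuous_iff {Δ : Type*} [Group Δ] [Countable Δ] (Γ : Subgroup Δ)
    (T : Set Δ) (hT : IsLeftTransversal Γ T)
    (c : IRSSpace ↥Γ → IRSSpace Δ)
    (hc : ∀ θ : IRSSpace ↥Γ,
      CindSpec Γ T (θ.1 : Measure (Subgroup ↥Γ)) ((c θ).1 : Measure (Subgroup Δ))) :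
    Continuous c ↔ (Finite (Δ ⧸ Γ) ∨ Γ.normalCore = ⊥) := by
  constructor
  · -- continuity implies finite index or trivial core
    intro hcont
    by_contra hnot
    push_neg at hnot
    obtain ⟨hinfq, hcore⟩ := hnot
    haveI hTinf : Infinite ↥T := transversal_infinite hT (not_finite_iff_infinite.mpr hinfq)
    obtain ⟨γ, hγcore, hγne⟩ : ∃ γ ∈ Γ.normalCore, γ ≠ 1 := by
      by_contra hno
      push_neg at hno
      exact hcore ((Subgroup.eq_bot_iff_forall _).mpr hno)
    set an : ℕ → ℝ≥0 := fun n => 1 - ((n : ℝ≥0) + 2)⁻¹ with han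
    set bn : ℕ → ℝ≥0 := fun n => ((n : ℝ≥0) + 2)⁻¹ with hbn
    have hbpos : ∀ n, 0 < bn n := by
      intro n; rw [hbn]; positivity
    have hble : ∀ n, bn n ≤ 1 := by
      intro n
      rw [hbn]
      simp only
      refine inv_le_one_of_one_le₀ ?_
      calc (1:ℝ≥0) ≤ 2 := one_le_two
        _ ≤ (n : ℝ≥0) + 2 := le_add_self
    have hab : ∀ n, an n + bn n = 1 := fun n => tsub_add_cancel_of_le (hble n)
    have halt1 : ∀ n, an n < 1 := fun n => tsub_lt_self one_pos (hbpos n)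
    set μn : ℕ → Measure (Subgroup ↥Γ) :=
      fun n => (an n : ℝ≥0∞) • Measure.dirac ⊤ + (bn n : ℝ≥0∞) • Measure.dirac ⊥ with hμn
    have hμn_apply : ∀ n {s : Set (Subgroup ↥Γ)}, MeasurableSet s →
        μn n s = (an n : ℝ≥0∞) * s.indicator 1 ⊤ + (bn n : ℝ≥0∞) * s.indicator 1 ⊥ :=
      fun n _ hs => mix_apply _ _ hs
    have hprob : ∀ n, IsProbabilityMeasure (μn n) := by
      intro n
      constructor
      rw [hμn_apply n MeasurableSet.univ]
      simp only [Set.indicator_univ, Pi.one_apply, mul_one]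
      rw [← ENNReal.coe_add, hab n, ENNReal.coe_one]
    have hinv : ∀ n (g : ↥Γ), Measure.map (conjSub g) (μn n) = μn n := by
      intro n g
      rw [hμn]
      simp only
      rw [Measure.map_add _ _ (measurable_conjSub g), Measure.map_smul, Measure.map_smul,
        Measure.map_dirac' (measurable_conjSub g), Measure.map_dirac' (measurable_conjSub g),
        conjSub_top, conjSub_bot]
    set θn : ℕ → IRSSpace ↥Γ := fun n => ⟨⟨μn n, hprob n⟩, hinv n⟩ with hθn
    set θlim : IRSSpace ↥Γ := ⟨⟨Measure.dirac ⊤, inferInstance⟩,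
      fun g => by
        show Measure.map (conjSub g) (Measure.dirac (⊤ : Subgroup ↥Γ)) = Measure.dirac ⊤
        rw [Measure.map_dirac' (measurable_conjSub g), conjSub_top]⟩ with hθlim
    have hconv : Tendsto θn atTop (𝓝 θlim) := by
      refine tendsto_subtype_rng.mpr ?_
      rw [tendsto_iff_forall_NSet]
      intro F
      have hdone : ((θlim.1 : Measure (Subgroup ↥Γ)) (NSet (F : Set ↥Γ))).toReal = 1 := by
        show ((Measure.dirac (⊤ : Subgroup ↥Γ)) (NSet (F : Set ↥Γ))).toReal = 1
        rw [Measure.dirac_apply' _ (measurableSet_NSet _), Set.indicator_of_mem top_mem_NSet]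
        simp
      by_cases hbot : (⊥ : Subgroup ↥Γ) ∈ NSet ((F : Set ↥Γ))
      · have hval : ∀ n, (((θn n).1 : Measure (Subgroup ↥Γ)) (NSet (F : Set ↥Γ))).toReal = 1 := by
          intro n
          show ((μn n) (NSet (F : Set ↥Γ))).toReal = 1
          rw [hμn_apply n (measurableSet_NSet _), Set.indicator_of_mem top_mem_NSet,
            Set.indicator_of_mem hbot]
          simp only [Pi.one_apply, mul_one]
          rw [← ENNReal.coe_add, hab n]
          simp
        rw [hdone]
        exact Tendsto.congr (fun n => (hval n).symm) tendsto_const_nhds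
      · have hval : ∀ n, (((θn n).1 : Measure (Subgroup ↥Γ)) (NSet (F : Set ↥Γ))).toReal
            = 1 - ((n : ℝ) + 2)⁻¹ := by
          intro n
          show ((μn n) (NSet (F : Set ↥Γ))).toReal = _
          rw [hμn_apply n (measurableSet_NSet _), Set.indicator_of_mem top_mem_NSet,
            Set.indicator_of_notMem hbot]
          simp only [Pi.one_apply, mul_one, mul_zero, add_zero]
          rw [ENNReal.coe_toReal, han]
          simp only
          rw [NNReal.coe_sub (hble n), hbn]
          push_cast
          ring
        rw [hdone]
        refine Tendsto.congr (fun n => (hval n).symm) ?_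
        have hz : Tendsto (fun n : ℕ => ((n : ℝ) + 2)⁻¹) atTop (𝓝 0) :=
          tendsto_inv_atTop_zero.comp
            (tendsto_atTop_add_const_right _ 2 tendsto_natCast_atTop_atTop)
        have hfin := (tendsto_const_nhds (x := (1:ℝ)) (f := atTop)).sub hz
        simpa using hfin
    have hcomp : Tendsto (fun n => c (θn n)) atTop (𝓝 (c θlim)) :=
      (hcont.tendsto θlim).comp hconv
    have hval : Tendsto (fun n => (c (θn n)).1) atTop (𝓝 (c θlim).1) :=
      tendsto_subtype_rng.mp hcomp
    have hFten := (tendsto_iff_forall_NSet (fun n => (c (θn n)).1) ((c θlim).1)).mp hval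
      ({γ} : Finset Δ)
    have hsub : (({γ} : Finset Δ) : Set Δ) ⊆ (Γ.normalCore : Set Δ) := by
      simp only [Finset.coe_singleton, Set.singleton_subset_iff, SetLike.mem_coe]
      exact hγcore
    have hzero : ∀ n,
        ((c (θn n)).1 : Measure (Subgroup Δ)) (NSet ((({γ} : Finset Δ)) : Set Δ)) = 0 := by
      intro n
      rw [(hc (θn n) {γ}).2 hsub]
      have hfac : ∀ t : ↥T,
          ((θn n).1 : Measure (Subgroup ↥Γ))
            (NpullSet Γ ((fun d => (t : Δ)⁻¹ * d * (t : Δ)) '' (({γ} : Finset Δ) : Set Δ)))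
            = (an n : ℝ≥0∞) := by
        intro t
        set x0 : Δ := (t : Δ)⁻¹ * γ * (t : Δ) with hx0
        have himg : ((fun d => (t : Δ)⁻¹ * d * (t : Δ)) '' (({γ} : Finset Δ) : Set Δ))
            = {x0} := by
          simp [hx0]
        rw [himg]
        have hx0Γ : x0 ∈ Γ := by
          refine Subgroup.normalCore_le Γ ?_
          have hco := (Subgroup.normalCore_normal Γ).conj_mem γ hγcore (t : Δ)⁻¹
          simpa [hx0] using hco
        have hx0ne : x0 ≠ 1 := by
          intro h1
          apply hγne
          have hγ1 : γ = (t : Δ) * 1 * (t : Δ)⁻¹ := by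
            rw [← h1, hx0]; group
          simpa using hγ1
        show (μn n) (NpullSet Γ {x0}) = _
        rw [NpullSet_eq_NSet]
        rw [hμn_apply n (measurableSet_NSet _), Set.indicator_of_mem top_mem_NSet]
        have hbot : (⊥ : Subgroup ↥Γ) ∉ NSet ((Subtype.val : ↥Γ → Δ) ⁻¹' {x0}) := by
          intro hmem
          have hx : (⟨x0, hx0Γ⟩ : ↥Γ) ∈ (⊥ : Subgroup ↥Γ) := hmem (by simp [Set.mem_preimage])
          rw [Subgroup.mem_bot] at hx
          exact hx0ne (by simpa using congrArg (Subtype.val) hx)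
        rw [Set.indicator_of_notMem hbot]
        simp
      rw [tprod_congr hfac, tprod_const_zero (by exact_mod_cast halt1 n)]
    have hone : ((c θlim).1 : Measure (Subgroup Δ)) (NSet ((({γ} : Finset Δ)) : Set Δ)) = 1 := by
      rw [(hc θlim {γ}).2 hsub]
      have hfac : ∀ t : ↥T, ((θlim.1 : Measure (Subgroup ↥Γ)))
          (NpullSet Γ ((fun d => (t : Δ)⁻¹ * d * (t : Δ)) '' (({γ} : Finset Δ) : Set Δ)))
            = 1 := by
        intro t
        show (Measure.dirac (⊤ : Subgroup ↥Γ)) (NpullSet Γ _) = 1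
        rw [NpullSet_eq_NSet, Measure.dirac_apply' _ (measurableSet_NSet _),
          Set.indicator_of_mem top_mem_NSet]
        simp
      rw [tprod_congr hfac, tprod_one]
    have hF0 : Tendsto (fun _ : ℕ => (0 : ℝ)) atTop
        (𝓝 (((c θlim).1 : Measure (Subgroup Δ))
          (NSet ((({γ} : Finset Δ)) : Set Δ))).toReal) :=
      Tendsto.congr (fun n => by rw [hzero n]; simp) hFten
    rw [hone] at hF0
    have hcontra := tendsto_nhds_unique hF0 tendsto_const_nhds
    norm_num at hcontra
  · rintro (hfin | hcore)
    · -- finite index: the co-induction formula is a finite product of continuous functions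
      haveI hTf : Finite ↥T := transversal_finite hT hfin
      letI : Fintype ↥T := Fintype.ofFinite ↥T
      have hcv : Continuous fun θ : IRSSpace ↥Γ => (c θ).1 := by
        rw [continuous_iff_continuousAt]
        intro θ
        refine (tendsto_iff_forall_NSet (fun θ' : IRSSpace ↥Γ => (c θ').1) ((c θ).1)).mpr ?_
        intro F
        by_cases hF : (F : Set Δ) ⊆ (Γ.normalCore : Set Δ)
        · have hval : ∀ θ' : IRSSpace ↥Γ,
              (((c θ').1 : Measure (Subgroup Δ)) (NSet (F : Set Δ))).toReal
                = ∏ t : ↥T, ((θ'.1 : Measure (Subgroup ↥Γ))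
                    (NpullSet Γ ((fun d => (t : Δ)⁻¹ * d * (t : Δ)) '' (F : Set Δ)))).toReal := by
            intro θ'
            rw [(hc θ' F).2 hF, tprod_fintype, ENNReal.toReal_prod]
          simp only [hval]
          refine tendsto_finset_prod _ (fun t _ => ?_)
          have hfin' : ((Subtype.val : ↥Γ → Δ) ⁻¹'
              ((fun d => (t : Δ)⁻¹ * d * (t : Δ)) '' (F : Set Δ))).Finite :=
            Set.Finite.preimage (Set.injOn_of_injective Subtype.val_injective)
              (F.finite_toSet.image _)
          have hNs : NpullSet Γ ((fun d => (t : Δ)⁻¹ * d * (t : Δ)) '' (F : Set Δ))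
              = NSet ((hfin'.toFinset : Finset ↥Γ) : Set ↥Γ) := by
            rw [NpullSet_eq_NSet, Set.Finite.coe_toFinset]
          simp only [hNs]
          exact (tendsto_iff_forall_NSet (fun θ' : IRSSpace ↥Γ => θ'.1) θ.1).mp
            (continuous_subtype_val.tendsto θ) hfin'.toFinset
        · have hval : ∀ θ' : IRSSpace ↥Γ,
              (((c θ').1 : Measure (Subgroup Δ)) (NSet (F : Set Δ))).toReal = 0 := fun θ' => by
            rw [(hc θ' F).1 hF]; simp
          simp only [hval]
          exact tendsto_const_nhds
      exact hcv.subtype_mk _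
    · -- trivial core: c is constant
      have hconst : ∀ θ θ' : IRSSpace ↥Γ, c θ = c θ' := by
        intro θ θ'
        have hmeq : ((c θ).1 : Measure (Subgroup Δ)) = ((c θ').1 : Measure (Subgroup Δ)) := by
          refine measure_ext_NSet ?_
          intro F
          by_cases hF : (F : Set Δ) ⊆ (Γ.normalCore : Set Δ)
          · have hone : ∀ θ'' : IRSSpace ↥Γ,
                ((c θ'').1 : Measure (Subgroup Δ)) (NSet (F : Set Δ)) = 1 := by
              intro θ''
              rw [(hc θ'' F).2 hF]
              have hfac : ∀ t : ↥T, (θ''.1 : Measure (Subgroup ↥Γ))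
                  (NpullSet Γ ((fun d => (t : Δ)⁻¹ * d * (t : Δ)) '' (F : Set Δ))) = 1 := by
                intro t
                have huniv : NpullSet Γ ((fun d => (t : Δ)⁻¹ * d * (t : Δ)) '' (F : Set Δ))
                    = Set.univ := by
                  refine Set.eq_univ_of_forall fun Λ => ?_
                  intro x hx
                  obtain ⟨d, hdF, hdx⟩ := hx
                  have hd1 : d = 1 := by
                    have hdm := hF hdF
                    rw [hcore] at hdm
                    simpa using hdm
                  have hx1 : (x : Δ) = 1 := by rw [← hdx, hd1]; group
                  have hxx : x = 1 := OneMemClass.coe_eq_one.mp hx1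
                  rw [hxx]; exact Λ.one_mem
                rw [huniv]
                exact measure_univ
              rw [tprod_congr hfac, tprod_one]
            rw [hone θ, hone θ']
          · rw [(hc θ F).1 hF, (hc θ' F).1 hF]
        exact Subtype.ext (Subtype.ext hmeq)
      cases isEmpty_or_nonempty (IRSSpace ↥Γ) with
      | inl h =>
        refine continuous_def.mpr fun s _ => ?_
        rw [Set.eq_empty_of_isEmpty (c ⁻¹' s)]
        exact isOpen_empty
      | inr h =>
        obtain ⟨θ₀⟩ := h
        have hcc : c = fun _ => c θ₀ := funext fun θ => hconst θ θ₀
        rw [hcc]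
        exact continuous_const

end Main
end IRSPaper
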